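/- Let X, Y, X', Y' be n-element edges with |X ∩ Y| = 1, |X' ∩ Y'| = 1, Y ≠ Y', X ∩ Y = {y}, X' ∩ Y' = {y'}, with y ∉ Y' and (X \ {y}) ∩ Y' = ∅. Then there exists an ordering π of the vertex set that separates both (X, Y) and (X', Y'). -/

import Mathlib

open Classical

/-- `π` separates the simple pair `(X, Y)`: with `X ∩ Y = {y}`, all of `X \ {y}`
precedes `y` and `y` precedes all of `Y \ {y}` in the ordering `π`. -/
def Separates {V : Type*} [Fintype V] [DecidableEq V] (π : V ≃ Fin (Fintype.card V))
    (X Y : Finset V) : Prop :=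
  ∃ y, X ∩ Y = {y} ∧ (∀ x ∈ X, x ≠ y → π x < π y) ∧ (∀ z ∈ Y, z ≠ y → π y < π z)

/-- A hypergraph with edge set `E` is 2-colorable if some 2-coloring of the vertices
leaves no edge monochromatic. -/
def TwoColorable {V : Type*} (E : Finset (Finset V)) : Prop :=
  ∃ c : V → Bool, ∀ X ∈ E, (∃ v ∈ X, c v = true) ∧ (∃ v ∈ X, c v = false)

/-- `m₂(H)`: the number of ordered simple pairs of edges. -/
def m2 {V : Type*} [DecidableEq V] (E : Finset (Finset V)) : ℕ :=
  ((E ×ˢ E).filter fun p => (p.1 ∩ p.2).card = 1).card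

theorem stmt_12 {V : Type*} [Fintype V] [DecidableEq V] (n : ℕ)
    (X Y X' Y' : Finset V) (y y' : V)
    (hX : X.card = n) (hY : Y.card = n) (hX' : X'.card = n) (hY' : Y'.card = n)
    (hy : X ∩ Y = {y}) (hy' : X' ∩ Y' = {y'})
    (hYne : Y ≠ Y') (hyY' : y ∉ Y') (hdisj : (X \ {y}) ∩ Y' = ∅) :
    ∃ π : V ≃ Fin (Fintype.card V), Separates π X Y ∧ Separates π X' Y' := by
  classical
  have hy'Y' : y' ∈ Y' := by
    have h : y' ∈ X' ∩ Y' := by rw [hy']; exact Finset.mem_singleton_self y'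
    exact (Finset.mem_inter.mp h).2
  have hy'X' : y' ∈ X' := by
    have h : y' ∈ X' ∩ Y' := by rw [hy']; exact Finset.mem_singleton_self y'
    exact (Finset.mem_inter.mp h).1
  have hyne : y ≠ y' := fun h => hyY' (h ▸ hy'Y')
  set w : V → ℕ := fun v =>
    if v ∈ X \ {y} then 0 else if v = y then 1 else if v ∈ X' \ {y'} then 2
    else if v = y' then 3 else 4 with hw
  let e := Fintype.equivFin V
  let f : V → ℕ ×ₗ Fin (Fintype.card V) := fun v => toLex (w v, e v)
  have hf : Function.Injective f := by
    intro a b h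
    have h2 : (ofLex (f a)).2 = (ofLex (f b)).2 := by rw [h]
    exact e.injective h2
  have hs : (Finset.univ.image f).card = Fintype.card V := by
    rw [Finset.card_image_of_injective _ hf, Finset.card_univ]
  let ι := (Finset.univ.image f).orderIsoOfFin hs
  let g : V → Fin (Fintype.card V) := fun v =>
    ι.symm ⟨f v, Finset.mem_image_of_mem f (Finset.mem_univ v)⟩
  have hg : Function.Injective g := by
    intro a b h
    have h2 := ι.symm.injective h
    exact hf (Subtype.ext_iff.mp h2)
  have hgb : Function.Bijective g :=
    (Fintype.bijective_iff_injective_and_card g).mpr ⟨hg, by simp⟩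
  have hmono : ∀ a b : V, w a < w b → g a < g b := by
    intro a b hab
    have hfab : f a < f b := Prod.Lex.lt_iff.mpr (Or.inl hab)
    exact ι.symm.lt_iff_lt.mpr (Subtype.mk_lt_mk.mpr hfab)
  refine ⟨Equiv.ofBijective g hgb, ⟨y, hy, ?_, ?_⟩, ⟨y', hy', ?_, ?_⟩⟩
  · intro x hxX hxne
    apply hmono
    have h1 : x ∈ X \ {y} := Finset.mem_sdiff.mpr ⟨hxX, by simpa using hxne⟩
    have h2 : y ∉ X \ {y} := by simp
    simp only [hw, if_pos h1, if_neg h2]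
    norm_num
  · intro z hzY hzne
    apply hmono
    have h1 : z ∉ X \ {y} := by
      intro hz1
      have h : z ∈ X ∩ Y := Finset.mem_inter.mpr ⟨(Finset.mem_sdiff.mp hz1).1, hzY⟩
      rw [hy] at h; exact hzne (Finset.mem_singleton.mp h)
    have h2 : y ∉ X \ {y} := by simp
    simp only [hw, if_neg h1, if_neg h2, if_pos rfl, if_neg hzne]
    split_ifs <;> omega
  · intro x hxX' hxne
    apply hmono
    have hy'1 : y' ∉ X \ {y} := by
      intro h
      have : y' ∈ (X \ {y}) ∩ Y' := Finset.mem_inter.mpr ⟨h, hy'Y'⟩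
      rw [hdisj] at this; exact absurd this (Finset.notMem_empty y')
    have hx2 : x ∈ X' \ {y'} := Finset.mem_sdiff.mpr ⟨hxX', by simpa using hxne⟩
    have hy'3 : y' ∉ X' \ {y'} := by simp
    simp only [hw, if_neg hy'1, if_neg hyne.symm, if_neg hy'3, if_pos rfl]
    split_ifs with h1 h2 h3 <;> first | omega | exact absurd hx2 h3
  · intro z hzY' hzne
    apply hmono
    have hy'1 : y' ∉ X \ {y} := by
      intro h
      have : y' ∈ (X \ {y}) ∩ Y' := Finset.mem_inter.mpr ⟨h, hy'Y'⟩
      rw [hdisj] at this; exact absurd this (Finset.notMem_empty y')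
    have hy'3 : y' ∉ X' \ {y'} := by simp
    have hz1 : z ∉ X \ {y} := by
      intro h
      have : z ∈ (X \ {y}) ∩ Y' := Finset.mem_inter.mpr ⟨h, hzY'⟩
      rw [hdisj] at this; exact absurd this (Finset.notMem_empty z)
    have hz2 : z ≠ y := fun h => hyY' (h ▸ hzY')
    have hz3 : z ∉ X' \ {y'} := by
      intro h
      have hh : z ∈ X' ∩ Y' := Finset.mem_inter.mpr ⟨(Finset.mem_sdiff.mp h).1, hzY'⟩
      rw [hy'] at hh; exact hzne (Finset.mem_singleton.mp hh)
    simp only [hw, if_neg hy'1, if_neg hyne.symm, if_neg hy'3, if_pos rfl,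
      if_neg hz1, if_neg hz2, if_neg hz3, if_neg hzne]
    norm_num
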